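/- Let A_1 be an n_1×n_2 complex matrix, let A be the (n_1+n_2)×(n_1+n_2) block matrix [[0, A_1], [0, 0]], and let A''' be the 2×2 matrix [[0, γ(A_1)], [0, 0]], where γ(A_1) is the reduced minimum modulus of A_1. Then w(A) ≥ w(A'''). -/

import Mathlib

/-- The numerical radius `w(M)` of a square complex matrix, acting on Euclidean space:
`w(M) = sup {|⟨Mx, x⟩| : ‖x‖ = 1}` (here `inner x (M x)` is Mathlib's inner product, conjugate
linear in the first variable, so it equals the paper's `⟨Mx, x⟩`). -/
noncomputable def numRadius {ι : Type*} [Fintype ι] [DecidableEq ι] (M : Matrix ι ι ℂ) : ℝ :=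
  sSup {r : ℝ | ∃ x : EuclideanSpace ℂ ι, ‖x‖ = 1 ∧
    ‖(inner ℂ x (Matrix.toEuclideanLin M x) : ℂ)‖ = r}

open Classical in
/-- The reduced minimum modulus `γ(A) = min {‖Ax‖ : ‖x‖ = 1, x ⊥ ker A}` for `A ≠ 0`,
and `γ(0) = 0`. -/
noncomputable def reducedMinModulus {m n : Type*} [Fintype m] [Fintype n] [DecidableEq n]
    (A : Matrix m n ℂ) : ℝ :=
  if A = 0 then 0 else
    sInf {r : ℝ | ∃ x : EuclideanSpace ℂ n, ‖x‖ = 1 ∧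
      x ∈ (LinearMap.ker (Matrix.toEuclideanLin A))ᗮ ∧ ‖Matrix.toEuclideanLin A x‖ = r}

set_option maxHeartbeats 1000000
set_option synthInstance.maxHeartbeats 400000

lemma toEuclideanLin_apply' {m n : Type*} [Fintype m] [Fintype n] [DecidableEq n]
    (M : Matrix m n ℂ) (v : EuclideanSpace ℂ n) (i : m) :
    Matrix.toEuclideanLin M v i = ∑ j, M i j * v j := rfl

lemma numRadius_set_bddAbove {ι : Type*} [Fintype ι] [DecidableEq ι] (M : Matrix ι ι ℂ) :
    BddAbove {r : ℝ | ∃ x : EuclideanSpace ℂ ι, ‖x‖ = 1 ∧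
      ‖(inner ℂ x (Matrix.toEuclideanLin M x) : ℂ)‖ = r} := by
  refine ⟨‖LinearMap.toContinuousLinearMap (Matrix.toEuclideanLin M)‖, ?_⟩
  rintro r ⟨x, hx, rfl⟩
  calc ‖(inner ℂ x (Matrix.toEuclideanLin M x) : ℂ)‖
      = ‖(inner ℂ x (Matrix.toEuclideanLin M x) : ℂ)‖ := rfl
    _ ≤ ‖x‖ * ‖Matrix.toEuclideanLin M x‖ := norm_inner_le_norm _ _
    _ = ‖LinearMap.toContinuousLinearMap (Matrix.toEuclideanLin M) x‖ := by
        rw [hx, one_mul]; rfl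
    _ ≤ ‖LinearMap.toContinuousLinearMap (Matrix.toEuclideanLin M)‖ * ‖x‖ :=
        ContinuousLinearMap.le_opNorm _ _
    _ = _ := by rw [hx, mul_one]

lemma numRadius_nonneg {ι : Type*} [Fintype ι] [DecidableEq ι] (M : Matrix ι ι ℂ) :
    0 ≤ numRadius M :=
  Real.sSup_nonneg (by rintro r ⟨x, hx, rfl⟩; exact norm_nonneg _)

lemma abs_inner_le_numRadius {ι : Type*} [Fintype ι] [DecidableEq ι] (M : Matrix ι ι ℂ)
    (x : EuclideanSpace ℂ ι) (hx : ‖x‖ = 1) :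
    ‖(inner ℂ x (Matrix.toEuclideanLin M x) : ℂ)‖ ≤ numRadius M :=
  le_csSup (numRadius_set_bddAbove M) ⟨x, hx, rfl⟩

lemma reducedMinModulus_nonneg {m n : Type*} [Fintype m] [Fintype n] [DecidableEq n]
    (A : Matrix m n ℂ) : 0 ≤ reducedMinModulus A := by
  unfold reducedMinModulus
  split
  · exact le_rfl
  · exact Real.sInf_nonneg (by rintro r ⟨x, hx, hker, rfl⟩; exact norm_nonneg _)

lemma sum_norm_sq_of_unit {n : Type*} [Fintype n] (x : EuclideanSpace ℂ n) (h : ‖x‖ = 1) :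
    ∑ i, ‖x i‖ ^ 2 = 1 := by
  have h2 : Real.sqrt (∑ i, ‖x i‖ ^ 2) = 1 := (h ▸ EuclideanSpace.norm_eq x).symm
  exact Real.sqrt_eq_one.mp h2

lemma inner_normalize {n : Type*} [Fintype n] (w : EuclideanSpace ℂ n) (hw : w ≠ 0) :
    (inner ℂ ((‖w‖⁻¹ : ℝ) • w) w : ℂ) = (‖w‖ : ℂ) := by
  rw [RCLike.real_smul_eq_coe_smul (K := ℂ), inner_smul_left, inner_self_eq_norm_sq_to_K,
    RCLike.conj_ofReal]
  have hwne : (‖w‖ : ℝ) ≠ 0 := norm_ne_zero_iff.mpr hw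
  push_cast
  field_simp
  rfl

/-- For `A = [[0, A₁], [0, 0]]` and `A''' = [[0, γ(A₁)], [0, 0]]`, one has
`w(A) ≥ w(A''')`. -/
theorem numRadius_superdiag_reducedMinModulus_le_numRadius_two_blocks {n₁ n₂ : ℕ}
    (A₁ : Matrix (Fin n₁) (Fin n₂) ℂ) :
    numRadius (!![0, (reducedMinModulus A₁ : ℂ); 0, 0])
      ≤ numRadius (Matrix.fromBlocks (0 : Matrix (Fin n₁) (Fin n₁) ℂ) A₁ 0 0) := by
  set γ := reducedMinModulus A₁ with hγ
  have hγ0 : 0 ≤ γ := reducedMinModulus_nonneg A₁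
  set A := Matrix.fromBlocks (0 : Matrix (Fin n₁) (Fin n₁) ℂ) A₁ 0 0 with hA
  have stepB : γ / 2 ≤ numRadius A := by
    by_cases h0 : A₁ = 0
    · have : γ = 0 := by rw [hγ, reducedMinModulus, if_pos h0]
      rw [this]
      simpa using numRadius_nonneg A
    · have hker : (LinearMap.ker (Matrix.toEuclideanLin A₁))ᗮ ≠ ⊥ := by
        rw [Ne, Submodule.orthogonal_eq_bot_iff]
        intro htop
        exact h0 (by
          have : Matrix.toEuclideanLin A₁ = 0 := LinearMap.ker_eq_top.mp htop
          simpa using (LinearEquiv.map_eq_zero_iff Matrix.toEuclideanLin).mp this)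
      obtain ⟨v0, hv0mem, hv0ne⟩ := Submodule.exists_mem_ne_zero_of_ne_bot hker
      set v : EuclideanSpace ℂ (Fin n₂) := (‖v0‖⁻¹ : ℝ) • v0 with hv
      have hvnorm : ‖v‖ = 1 := by
        rw [hv, norm_smul]
        simp [norm_ne_zero_iff.mpr hv0ne, inv_mul_cancel₀, abs_of_nonneg
          (inv_nonneg.mpr (norm_nonneg v0))]
      have hvmem : v ∈ (LinearMap.ker (Matrix.toEuclideanLin A₁))ᗮ :=
        Submodule.smul_of_tower_mem _ _ hv0mem
      have hγle : γ ≤ ‖Matrix.toEuclideanLin A₁ v‖ := by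
        rw [hγ, reducedMinModulus, if_neg h0]
        exact csInf_le ⟨0, by rintro r ⟨x, _, _, rfl⟩; exact norm_nonneg _⟩
          ⟨v, hvnorm, hvmem, rfl⟩
      set w := Matrix.toEuclideanLin A₁ v with hw
      by_cases hw0 : w = 0
      · have : γ = 0 := le_antisymm (by simpa [hw0] using hγle) hγ0
        rw [this]
        simpa using numRadius_nonneg A
      · set u : EuclideanSpace ℂ (Fin n₁) := (‖w‖⁻¹ : ℝ) • w with hu
        have hunorm : ‖u‖ = 1 := by
          rw [hu, norm_smul]
          simp [norm_ne_zero_iff.mpr hw0, inv_mul_cancel₀, abs_of_nonneg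
            (inv_nonneg.mpr (norm_nonneg w))]
        set z : EuclideanSpace ℂ (Fin n₁ ⊕ Fin n₂) :=
          (WithLp.equiv 2 _).symm (Sum.elim (u : Fin n₁ → ℂ) (v : Fin n₂ → ℂ)) with hz
        have hzl : ∀ i, z (Sum.inl i) = u i := fun i => rfl
        have hzr : ∀ i, z (Sum.inr i) = v i := fun i => rfl
        have hznorm : ‖z‖ = Real.sqrt 2 := by
          rw [EuclideanSpace.norm_eq]
          congr 1
          rw [Fintype.sum_sum_type]
          simp only [hzl, hzr]
          rw [sum_norm_sq_of_unit u hunorm, sum_norm_sq_of_unit v hvnorm]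
          norm_num
        have hAzl : ∀ i, (Matrix.toEuclideanLin A z) (Sum.inl i) = w i := by
          intro i
          rw [toEuclideanLin_apply', Fintype.sum_sum_type]
          simp only [hA, Matrix.fromBlocks_apply₁₁, Matrix.fromBlocks_apply₁₂,
            Matrix.zero_apply, zero_mul, Finset.sum_const_zero, zero_add, hzr]
          rw [hw, toEuclideanLin_apply']
        have hAzr : ∀ i, (Matrix.toEuclideanLin A z) (Sum.inr i) = 0 := by
          intro i
          rw [toEuclideanLin_apply', Fintype.sum_sum_type]
          simp only [hA, Matrix.fromBlocks_apply₂₁, Matrix.fromBlocks_apply₂₂,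
            Matrix.zero_apply, zero_mul, Finset.sum_const_zero, zero_add]
        have hinner : (inner ℂ z (Matrix.toEuclideanLin A z) : ℂ) = (‖w‖ : ℂ) := by
          rw [PiLp.inner_apply, Fintype.sum_sum_type]
          simp only [hzl, hzr, hAzl, hAzr, inner_zero_right, Finset.sum_const_zero, add_zero]
          rw [← PiLp.inner_apply, hu, inner_normalize w hw0]
        set c : ℂ := (((Real.sqrt 2)⁻¹ : ℝ) : ℂ) with hc
        set x : EuclideanSpace ℂ (Fin n₁ ⊕ Fin n₂) := c • z with hx
        have hs2 : Real.sqrt 2 ≠ 0 := by positivity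
        have hxnorm : ‖x‖ = 1 := by
          rw [hx, norm_smul, hznorm, hc]
          rw [Complex.norm_real, Real.norm_eq_abs,
            abs_of_nonneg (inv_nonneg.mpr (Real.sqrt_nonneg 2)), inv_mul_cancel₀ hs2]
        have hc2 : (Real.sqrt 2)⁻¹ * (Real.sqrt 2)⁻¹ = 1 / 2 := by
          rw [← mul_inv, Real.mul_self_sqrt (by norm_num : (0:ℝ) ≤ 2)]
          norm_num
        have hxinner : (inner ℂ x (Matrix.toEuclideanLin A x) : ℂ) = ((‖w‖ / 2 : ℝ) : ℂ) := by
          rw [hx, map_smul, inner_smul_left, inner_smul_right, hinner, hc,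
            Complex.conj_ofReal, ← mul_assoc, ← Complex.ofReal_mul, hc2,
            ← Complex.ofReal_mul]
          push_cast
          ring
        have hle := abs_inner_le_numRadius A x hxnorm
        rw [hxinner, Complex.norm_real, Real.norm_eq_abs, abs_of_nonneg (by positivity : (0:ℝ) ≤ ‖w‖/2)]
          at hle
        linarith
  have stepA : numRadius (!![0, (γ : ℂ); 0, 0]) ≤ γ / 2 := by
    apply Real.sSup_le
    · rintro r ⟨x, hx, rfl⟩
      have hi : (inner ℂ x (Matrix.toEuclideanLin !![0, (γ : ℂ); 0, 0] x) : ℂ)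
          = (starRingEnd ℂ) (x 0) * ((γ : ℂ) * x 1) := by
        rw [PiLp.inner_apply, Fin.sum_univ_two, toEuclideanLin_apply',
          toEuclideanLin_apply', Fin.sum_univ_two, Fin.sum_univ_two]
        simp
        ring
      rw [hi]
      have hsum := sum_norm_sq_of_unit x hx
      rw [Fin.sum_univ_two] at hsum
      rw [norm_mul, norm_mul]
      simp only [RCLike.norm_conj, Complex.norm_real, Real.norm_eq_abs, abs_of_nonneg hγ0]
      have e0 : ‖x 0‖ = ‖x 0‖ := rfl
      have e1 : ‖x 1‖ = ‖x 1‖ := rfl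
      rw [e0, e1]
      nlinarith [sq_nonneg (‖x 0‖ - ‖x 1‖), norm_nonneg (x 0), norm_nonneg (x 1)]
    · positivity
  exact le_trans stepA stepB
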